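/- In the 0-Hecke algebra H_n(0), the elements Y_j(t,u), defined by Y_j(t,u) := T_j if t > u and Y_j(t,u) := 1 + T_j if t ≤ u, satisfy the quantum Yang-Baxter equation: for all parameters t, u, v in a totally ordered set and all 1 ≤ i ≤ n-2, Y_i(t,u) Y_{i+1}(t,v) Y_i(u,v) = Y_{i+1}(u,v) Y_i(t,v) Y_{i+1}(t,u). -/

import Mathlib

/-!
STATEMENT 2: In the 0-Hecke algebra `H_n(0)`, the elements `Y_j(t,u)` (equal to `T_j`
if `t > u` and `1 + T_j` if `t ≤ u`) satisfy the quantum Yang-Baxter equation: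
for all parameters `t, u, v` in a totally ordered set and all `1 ≤ i ≤ n-2`,
`Y_i(t,u) Y_{i+1}(t,v) Y_i(u,v) = Y_{i+1}(u,v) Y_i(t,v) Y_{i+1}(t,u)`.

Here positions are 0-indexed: `j` ranges over `0 ≤ j` with `j + 2 < n`, so that both
`Y_j` and `Y_{j+1}` are defined.
-/

namespace AKSPaper

noncomputable section

/-- Defining relations of the 0-Hecke algebra `H_n(0)`.  The generator indexed by
`i : Fin (n-1)` is `T_{i+1}` (1-indexed), acting on 0-indexed positions `i, i+1`. -/
inductive HeckeRel (n : ℕ) :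
    FreeAlgebra ℂ (Fin (n - 1)) → FreeAlgebra ℂ (Fin (n - 1)) → Prop
  | quad (i : Fin (n - 1)) :
      HeckeRel n (FreeAlgebra.ι ℂ i * (1 + FreeAlgebra.ι ℂ i)) 0
  | braid (i j : Fin (n - 1)) (h : (i : ℕ) + 1 = j) :
      HeckeRel n (FreeAlgebra.ι ℂ i * FreeAlgebra.ι ℂ j * FreeAlgebra.ι ℂ i)
        (FreeAlgebra.ι ℂ j * FreeAlgebra.ι ℂ i * FreeAlgebra.ι ℂ j)
  | comm (i j : Fin (n - 1)) (h : (i : ℕ) + 2 ≤ j ∨ (j : ℕ) + 2 ≤ i) :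
      HeckeRel n (FreeAlgebra.ι ℂ i * FreeAlgebra.ι ℂ j)
        (FreeAlgebra.ι ℂ j * FreeAlgebra.ι ℂ i)

/-- The 0-Hecke algebra `H_n(0)`. -/
abbrev H (n : ℕ) := RingQuot (HeckeRel n)

/-- The generator `T_{i+1}` of `H_n(0)`. -/
def Tgen {n : ℕ} (i : Fin (n - 1)) : H n :=
  RingQuot.mkAlgHom ℂ (HeckeRel n) (FreeAlgebra.ι ℂ i)

/-- The generator `T` acting on the 0-indexed positions `j`, `j+1`. -/
def Tpos {n : ℕ} (j : ℕ) (h : j + 1 < n) : H n := Tgen ⟨j, by omega⟩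

/-- The elementary transposition exchanging the 0-indexed positions `j`, `j+1`. -/
def sw {n : ℕ} (j : ℕ) (h : j + 1 < n) : Equiv.Perm (Fin n) :=
  Equiv.swap ⟨j, by omega⟩ ⟨j + 1, h⟩

/-- The number of inversions of a permutation. -/
def invnum {n : ℕ} (σ : Equiv.Perm (Fin n)) : ℕ :=
  (Finset.univ.filter fun p : Fin n × Fin n => p.1 < p.2 ∧ σ p.2 < σ p.1).card

/-- The Yang-Baxter element `Y_j(t, u)`: `T_j` if `t > u`, `1 + T_j` if `t ≤ u`. -/
def Ygen {n : ℕ} {α : Type*} [LinearOrder α] (j : ℕ) (h : j + 1 < n) (t u : α) : H n :=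
  if t ≤ u then 1 + Tpos j h else Tpos j h

/-- `Y` is the family of Yang-Baxter basis elements: `Y_id(x) = 1` and
`Y_{s_j τ}(x) = Y_j(x_{τ⁻¹(j)}, x_{τ⁻¹(j+1)}) * Y_τ(x)` whenever `s_j τ` has one more
inversion than `τ`. -/
def IsYBFamily {n : ℕ} {α : Type*} [LinearOrder α]
    (Y : Equiv.Perm (Fin n) → (Fin n → α) → H n) : Prop :=
  (∀ x, Y 1 x = 1) ∧
  ∀ (j : ℕ) (h : j + 1 < n) (τ : Equiv.Perm (Fin n)) (x : Fin n → α),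
    invnum (sw j h * τ) = invnum τ + 1 →
    Y (sw j h * τ) x =
      Ygen j h (x (τ⁻¹ ⟨j, by omega⟩)) (x (τ⁻¹ ⟨j + 1, h⟩)) * Y τ x

/-- `i` (0-indexed, `i+1 < n`) is a descent of the permutation `σ`. -/
def descPerm {n : ℕ} (σ : Equiv.Perm (Fin n)) (i : ℕ) : Prop :=
  ∃ h : i + 1 < n, σ ⟨i + 1, h⟩ < σ ⟨i, by omega⟩

lemma Tgen_sq {n : ℕ} (i : Fin (n - 1)) : Tgen i * Tgen i = - Tgen i := by
  have h : (RingQuot.mkAlgHom ℂ (HeckeRel n)) (FreeAlgebra.ι ℂ i * (1 + FreeAlgebra.ι ℂ i))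
      = RingQuot.mkAlgHom ℂ (HeckeRel n) 0 :=
    RingQuot.mkAlgHom_rel ℂ (HeckeRel.quad i)
  simp only [map_mul, map_add, map_one, map_zero] at h
  rw [mul_add, mul_one, add_comm] at h
  exact eq_neg_of_add_eq_zero_left h

lemma Tgen_braid {n : ℕ} (i j : Fin (n - 1)) (hij : (i : ℕ) + 1 = j) :
    Tgen i * Tgen j * Tgen i = Tgen j * Tgen i * Tgen j := by
  have h := RingQuot.mkAlgHom_rel ℂ (HeckeRel.braid i j hij)
  simpa only [Tgen, map_mul] using h

section RingLemmas

variable {R : Type*} [Ring R] (a b : R)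

lemma yb1 (ha : a * a = -a) (hb : b * b = -b) (hbr : a * b * a = b * a * b) : (1+a)*(1+b)*(1+a) = (1+b)*(1+a)*(1+b) := by
  rw [show (1+a)*(1+b)*(1+a) = 1 + (a+a) + b + a*b + b*a + a*a + a*b*a from by noncomm_ring,
    show (1+b)*(1+a)*(1+b) = 1 + a + (b+b) + a*b + b*a + b*b + b*a*b from by noncomm_ring,
    ha, hb, hbr]
  abel

lemma yb3 (ha : a * a = -a) (hb : b * b = -b) (hbr : a * b * a = b * a * b) : (1+a)*(1+b)*a = b*(1+a)*(1+b) := by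
  rw [show (1+a)*(1+b)*a = a + a*a + b*a + a*b*a from by noncomm_ring,
    show b*(1+a)*(1+b) = b + b*a + b*b + b*a*b from by noncomm_ring, ha, hb, hbr]
  abel

lemma yb4 (hbr : a * b * a = b * a * b) : (1+a)*b*a = b*a*(1+b) := by
  rw [show (1+a)*b*a = b*a + a*b*a from by noncomm_ring,
    show b*a*(1+b) = b*a + b*a*b from by noncomm_ring, hbr]

lemma yb5 (ha : a * a = -a) (hb : b * b = -b) (hbr : a * b * a = b * a * b) : a*(1+b)*(1+a) = (1+b)*(1+a)*b := by
  rw [show a*(1+b)*(1+a) = a + a*b + a*a + a*b*a from by noncomm_ring,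
    show (1+b)*(1+a)*b = b + a*b + b*b + b*a*b from by noncomm_ring, ha, hb, hbr]
  abel

lemma yb6 (hbr : a * b * a = b * a * b) : a*b*(1+a) = (1+b)*a*b := by
  rw [show a*b*(1+a) = a*b + a*b*a from by noncomm_ring,
    show (1+b)*a*b = a*b + b*a*b from by noncomm_ring, hbr]

end RingLemmas

theorem yangBaxter_equation (n : ℕ) {α : Type*} [LinearOrder α]
    (j : ℕ) (h : j + 2 < n) (t u v : α) :
    Ygen (n := n) j (by omega) t u * Ygen (n := n) (j + 1) (by omega) t v *
        Ygen (n := n) j (by omega) u v =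
      Ygen (n := n) (j + 1) (by omega) u v * Ygen (n := n) j (by omega) t v *
        Ygen (n := n) (j + 1) (by omega) t u := by
  have ha : Tpos (n := n) j (by omega) * Tpos (n := n) j (by omega) =
      - Tpos (n := n) j (by omega) := Tgen_sq _
  have hb : Tpos (n := n) (j+1) (by omega) * Tpos (n := n) (j+1) (by omega) =
      - Tpos (n := n) (j+1) (by omega) := Tgen_sq _
  have hbr : Tpos (n := n) j (by omega) * Tpos (n := n) (j+1) (by omega) *
        Tpos (n := n) j (by omega) =
      Tpos (n := n) (j+1) (by omega) * Tpos (n := n) j (by omega) *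
        Tpos (n := n) (j+1) (by omega) :=
    Tgen_braid ⟨j, by omega⟩ ⟨j+1, by omega⟩ rfl
  simp only [Ygen]
  split_ifs <;>
    first
    | exact absurd (‹t ≤ u›.trans ‹u ≤ v›) ‹¬t ≤ v›
    | exact absurd (‹t ≤ v›.trans (lt_of_not_ge ‹¬u ≤ v›).le) ‹¬t ≤ u›
    | exact yb1 _ _ ha hb hbr
    | exact yb3 _ _ ha hb hbr
    | exact yb4 _ _ hbr
    | exact yb5 _ _ ha hb hbr
    | exact yb6 _ _ hbr
    | exact hbr

end

end AKSPaper
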